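/- For every field F there do not exist 10 pairwise distinct lines in ℙ²(F) having exactly two points of multiplicity 4 and exactly eleven triple points (and hence no double points and no points of multiplicity ≥ 5). -/

import Mathlib

/-- The projective plane over `F` (also used, by duality, for the lines of that plane). -/
abbrev ProjPlane (F : Type*) [Field F] := Projectivization F (Fin 3 → F)

/-- The point `P` lies on the line `L` (a line is recorded by the projective class of the
coefficient vector of a defining linear form): the pairing of representatives vanishes.
This does not depend on the choice of representatives. -/
def OnLine {F : Type*} [Field F] (P L : ProjPlane F) : Prop :=
  dotProduct P.rep L.rep = 0

/-- The multiplicity of a point `P` with respect to a configuration `lines`: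
the number of lines of the configuration passing through `P`. -/
noncomputable def mult {F : Type*} [Field F] (lines : Set (ProjPlane F))
    (P : ProjPlane F) : ℕ :=
  {L ∈ lines | OnLine P L}.ncard

section Aux

open Matrix

variable {F : Type*} [Field F]

lemma cross_perp_cross {x a b : Fin 3 → F}
    (h1 : x ⬝ᵥ a = 0) (h2 : x ⬝ᵥ b = 0) :
    crossProduct x (crossProduct a b) = 0 := by
  simp only [dotProduct, Fin.sum_univ_three] at h1 h2
  funext i
  fin_cases i <;> simp [cross_apply]
  · linear_combination a 0 * h2 - b 0 * h1
  · linear_combination a 1 * h2 - b 1 * h1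
  · linear_combination a 2 * h2 - b 2 * h1

lemma parallel_of_cross_eq_zero {x v : Fin 3 → F} (hv : v ≠ 0)
    (h : crossProduct x v = 0) : ∃ k : F, x = k • v := by
  obtain ⟨i, hi⟩ := Function.ne_iff.mp hv
  rw [Pi.zero_apply] at hi
  have h0 := congrFun h 0
  have h1 := congrFun h 1
  have h2 := congrFun h 2
  simp only [cross_apply, Matrix.cons_val_zero, Matrix.cons_val_one, Matrix.head_cons,
    Matrix.cons_val_two, Matrix.tail_cons, Pi.zero_apply, sub_eq_zero] at h0 h1 h2
  have e : ∀ j, x j * v i = x i * v j := by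
    intro j
    fin_cases i <;> fin_cases j <;>
      simp only [Fin.zero_eta, Fin.mk_one, Fin.isValue, Fin.reduceFinMk] <;>
      first
        | ring1
        | linear_combination h0
        | linear_combination -h0
        | linear_combination h1
        | linear_combination -h1
        | linear_combination h2
        | linear_combination -h2
  refine ⟨x i / v i, funext fun j => ?_⟩
  rw [Pi.smul_apply, smul_eq_mul, div_mul_eq_mul_div, eq_div_iff hi]
  exact e j

lemma interAux {L M : ProjPlane F} (h : L ≠ M) :
    ∃! P : ProjPlane F, OnLine P L ∧ OnLine P M := by
  have ha : L.rep ≠ 0 := L.rep_nonzero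
  have hb : M.rep ≠ 0 := M.rep_nonzero
  have hc : crossProduct L.rep M.rep ≠ 0 := by
    rw [crossProduct_ne_zero_iff_linearIndependent, LinearIndependent.pair_iff' ha]
    intro k hk
    apply h
    have : Projectivization.mk F M.rep hb = Projectivization.mk F L.rep ha := by
      rw [Projectivization.mk_eq_mk_iff']
      exact ⟨k, hk⟩
    simpa [Projectivization.mk_rep] using this.symm
  set c := crossProduct L.rep M.rep with hcdef
  -- uniqueness helper : any point on both lines equals mk c
  have key : ∀ P : ProjPlane F, OnLine P L → OnLine P M → P = Projectivization.mk F c hc := by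
    intro P hPL hPM
    have hx : P.rep ≠ 0 := P.rep_nonzero
    obtain ⟨k, hk⟩ := parallel_of_cross_eq_zero hc (cross_perp_cross hPL hPM)
    have : Projectivization.mk F P.rep hx = Projectivization.mk F c hc := by
      rw [Projectivization.mk_eq_mk_iff']
      exact ⟨k, hk.symm⟩
    simpa [Projectivization.mk_rep] using this
  refine ⟨Projectivization.mk F c hc, ⟨?_, ?_⟩, fun P hP => key P hP.1 hP.2⟩
  · obtain ⟨u, hu⟩ := Projectivization.exists_smul_eq_mk_rep F c hc
    show (Projectivization.mk F c hc).rep ⬝ᵥ L.rep = 0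
    rw [← hu, Units.smul_def, smul_dotProduct]
    have : L.rep ⬝ᵥ c = 0 := dot_self_cross _ _
    rw [dotProduct_comm] at this
    rw [this, smul_zero]
  · obtain ⟨u, hu⟩ := Projectivization.exists_smul_eq_mk_rep F c hc
    show (Projectivization.mk F c hc).rep ⬝ᵥ M.rep = 0
    rw [← hu, Units.smul_def, smul_dotProduct]
    have : M.rep ⬝ᵥ c = 0 := dot_cross_self _ _
    rw [dotProduct_comm] at this
    rw [this, smul_zero]

/-- The intersection point of two lines. -/
noncomputable def interP (L M : ProjPlane F) : ProjPlane F :=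
  Classical.epsilon (fun P => OnLine P L ∧ OnLine P M)

lemma interP_on {L M : ProjPlane F} (h : L ≠ M) :
    OnLine (interP L M) L ∧ OnLine (interP L M) M :=
  Classical.epsilon_spec (interAux h).exists

lemma interP_eq {L M P : ProjPlane F} (h : L ≠ M) (h1 : OnLine P L) (h2 : OnLine P M) :
    P = interP L M := by
  obtain ⟨W, hW, hU⟩ := interAux h
  exact (hU P ⟨h1, h2⟩).trans (hU (interP L M) (interP_on h)).symm

end Aux

/-- Over every field there is no configuration of `10` pairwise distinct lines in `ℙ²(F)`
with exactly two points of multiplicity `4` and exactly eleven triple points. -/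
theorem no_ten_lines_two_quadruple_points (F : Type*) [Field F] :
    ¬ ∃ lines : Set (ProjPlane F),
        lines.ncard = 10 ∧
        {P : ProjPlane F | mult lines P = 4}.ncard = 2 ∧
        {P : ProjPlane F | mult lines P = 3}.ncard = 11 := by
  classical
  rintro ⟨lines, h10, h4, h3⟩
  have hfin : lines.Finite := Set.finite_of_ncard_ne_zero (by omega)
  set s : Finset (ProjPlane F) := hfin.toFinset with hs
  have hscard : s.card = 10 := by
    rw [← Set.ncard_coe_finset, hfin.coe_toFinset]; exact h10
  set m : ProjPlane F → ℕ := fun P => (s.filter (fun L => OnLine P L)).card with hm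
  have hmult : ∀ P, mult lines P = m P := by
    intro P
    have hset : {L | L ∈ lines ∧ OnLine P L} = ↑(s.filter (fun L => OnLine P L)) := by
      ext L
      simp [hs, Set.Finite.mem_toFinset]
    show ({L | L ∈ lines ∧ OnLine P L}).ncard = (s.filter (fun L => OnLine P L)).card
    rw [hset, Set.ncard_coe_finset]
  -- the two quadruple points
  obtain ⟨A, B, hAB, hQ⟩ := Set.ncard_eq_two.mp h4
  have hmA : m A = 4 := by
    rw [← hmult]
    have : A ∈ {P : ProjPlane F | mult lines P = 4} := by rw [hQ]; exact Set.mem_insert _ _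
    exact this
  have hmB : m B = 4 := by
    rw [← hmult]
    have : B ∈ {P : ProjPlane F | mult lines P = 4} := by
      rw [hQ]; exact Set.mem_insert_iff.mpr (Or.inr rfl)
    exact this
  -- the triple points
  have hTfin : {P : ProjPlane F | mult lines P = 3}.Finite :=
    Set.finite_of_ncard_ne_zero (by omega)
  set tF : Finset (ProjPlane F) := hTfin.toFinset with htF
  have htFcard : tF.card = 11 := by
    rw [← Set.ncard_coe_finset, hTfin.coe_toFinset]; exact h3
  have htF3 : ∀ P ∈ tF, m P = 3 := by
    intro P hP
    rw [← hmult]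
    exact hTfin.mem_toFinset.mp hP
  set qF : Finset (ProjPlane F) := {A, B} with hqF
  have hqF4 : ∀ P ∈ qF, m P = 4 := by
    intro P hP
    rcases Finset.mem_insert.mp hP with h | h
    · rw [h]; exact hmA
    · rw [Finset.mem_singleton.mp h]; exact hmB
  -- the set of intersection points
  set t : Finset (ProjPlane F) := s.offDiag.image (fun p => interP p.1 p.2) with ht
  have ht2 : ∀ P ∈ t, 2 ≤ m P := by
    intro P hP
    obtain ⟨p, hp, hpe⟩ := Finset.mem_image.mp hP
    obtain ⟨h1, h2, hne⟩ := Finset.mem_offDiag.mp hp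
    obtain ⟨o1, o2⟩ := interP_on hne
    rw [hpe] at o1 o2
    refine Finset.one_lt_card.mpr ⟨p.1, ?_, p.2, ?_, hne⟩ <;>
      simp [Finset.mem_filter, h1, h2, o1, o2]
  have hmem2 : ∀ P, 2 ≤ m P → P ∈ t := by
    intro P hP
    obtain ⟨L, hL, M, hM, hne⟩ := Finset.one_lt_card.mp hP
    obtain ⟨hLs, hLon⟩ := Finset.mem_filter.mp hL
    obtain ⟨hMs, hMon⟩ := Finset.mem_filter.mp hM
    refine Finset.mem_image.mpr ⟨(L, M), Finset.mem_offDiag.mpr ⟨hLs, hMs, hne⟩, ?_⟩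
    exact (interP_eq hne hLon hMon).symm
  -- fibers of the intersection map
  have hfiber : ∀ P : ProjPlane F,
      s.offDiag.filter (fun p => interP p.1 p.2 = P)
        = (s.filter (fun L => OnLine P L)).offDiag := by
    intro P
    ext p
    simp only [Finset.mem_filter, Finset.mem_offDiag]
    constructor
    · rintro ⟨⟨h1, h2, hne⟩, heq⟩
      obtain ⟨o1, o2⟩ := interP_on hne
      rw [heq] at o1 o2
      exact ⟨⟨h1, o1⟩, ⟨h2, o2⟩, hne⟩
    · rintro ⟨⟨h1, o1⟩, ⟨h2, o2⟩, hne⟩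
      exact ⟨⟨h1, h2, hne⟩, (interP_eq hne o1 o2).symm⟩
  -- grand double counting
  have hsum : 90 = ∑ P ∈ t, (m P * m P - m P) := by
    have hmaps : ∀ p ∈ s.offDiag, interP p.1 p.2 ∈ t :=
      fun p hp => Finset.mem_image_of_mem _ hp
    have := Finset.card_eq_sum_card_fiberwise hmaps
    rw [Finset.offDiag_card, hscard] at this
    rw [show (90 : ℕ) = 10 * 10 - 10 by norm_num, this]
    refine Finset.sum_congr rfl fun P _ => ?_
    rw [hfiber P, Finset.offDiag_card]
  -- qF and tF are contained in t, and are disjoint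
  have hqsub : qF ⊆ t := fun P hP => hmem2 P (by rw [hqF4 P hP]; norm_num)
  have htsub : tF ⊆ t := fun P hP => hmem2 P (by rw [htF3 P hP]; norm_num)
  have hdisj : Disjoint qF tF := by
    rw [Finset.disjoint_left]
    intro P hPq hPt
    have := hqF4 P hPq
    have := htF3 P hPt
    omega
  have hunionsub : qF ∪ tF ⊆ t := Finset.union_subset hqsub htsub
  have hsumqt : ∑ P ∈ qF ∪ tF, (m P * m P - m P) = 90 := by
    rw [Finset.sum_union hdisj]
    have e1 : ∑ P ∈ qF, (m P * m P - m P) = 24 := by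
      rw [hqF, Finset.sum_pair hAB, hmA, hmB]
    have e2 : ∑ P ∈ tF, (m P * m P - m P) = 66 := by
      rw [Finset.sum_congr rfl (fun P hP => by rw [htF3 P hP]), Finset.sum_const, htFcard,
        smul_eq_mul]
    rw [e1, e2]
  -- hence every intersection point lies in qF ∪ tF
  have htsubq : t ⊆ qF ∪ tF := by
    by_contra hcon
    obtain ⟨P0, hP0t, hP0n⟩ := Finset.not_subset.mp hcon
    have hsplit : ∑ P ∈ t \ (qF ∪ tF), (m P * m P - m P)
        + ∑ P ∈ qF ∪ tF, (m P * m P - m P) = ∑ P ∈ t, (m P * m P - m P) :=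
      Finset.sum_sdiff hunionsub
    have hpos : 2 ≤ ∑ P ∈ t \ (qF ∪ tF), (m P * m P - m P) := by
      have h2 := ht2 P0 hP0t
      have h3 : 2 * m P0 ≤ m P0 * m P0 := Nat.mul_le_mul h2 le_rfl
      calc 2 ≤ 2 * m P0 - m P0 := by omega
        _ ≤ m P0 * m P0 - m P0 := Nat.sub_le_sub_right h3 _
        _ ≤ _ := Finset.single_le_sum (f := fun P => m P * m P - m P)
                  (fun _ _ => Nat.zero_le _) (Finset.mem_sdiff.mpr ⟨hP0t, hP0n⟩)
    omega
  -- per-line counting: each line contains exactly one of A, B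
  have hone : ∀ L ∈ s, (qF.filter (fun P => OnLine P L)).card = 1 := by
    intro L hLs
    set e : Finset (ProjPlane F) := s.erase L with he
    have hecard : e.card = 9 := by rw [he, Finset.card_erase_of_mem hLs, hscard]
    set tL : Finset (ProjPlane F) := t.filter (fun P => OnLine P L) with htL
    have hmaps : ∀ M ∈ e, interP L M ∈ tL := by
      intro M hM
      have hMs : M ∈ s := Finset.mem_of_mem_erase hM
      have hne : L ≠ M := (Finset.ne_of_mem_erase hM).symm
      refine Finset.mem_filter.mpr ⟨?_, (interP_on hne).1⟩
      exact Finset.mem_image.mpr ⟨(L, M), Finset.mem_offDiag.mpr ⟨hLs, hMs, hne⟩, rfl⟩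
    have hcnt := Finset.card_eq_sum_card_fiberwise hmaps
    have hfib : ∀ P ∈ tL, (e.filter (fun M => interP L M = P)).card = m P - 1 := by
      intro P hP
      obtain ⟨hPt, hPL⟩ := Finset.mem_filter.mp hP
      have : e.filter (fun M => interP L M = P)
          = (s.filter (fun M => OnLine P M)).erase L := by
        ext M
        simp only [Finset.mem_filter, Finset.mem_erase, he]
        constructor
        · rintro ⟨⟨hne, hMs⟩, heq⟩
          have hLM : L ≠ M := fun hc => hne hc.symm
          obtain ⟨o1, o2⟩ := interP_on hLM
          rw [heq] at o2
          exact ⟨hne, hMs, o2⟩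
        · rintro ⟨hne, hMs, hMon⟩
          have hLM : L ≠ M := fun hc => hne hc.symm
          exact ⟨⟨hne, hMs⟩, (interP_eq hLM hPL hMon).symm⟩
      rw [this, Finset.card_erase_of_mem (Finset.mem_filter.mpr ⟨hLs, hPL⟩)]
    rw [hecard, Finset.sum_congr rfl hfib] at hcnt
    -- split tL into quadruple and triple points
    have htLsplit : tL = tL.filter (fun P => P ∈ qF) ∪ tL.filter (fun P => P ∉ qF) :=
      (Finset.filter_union_filter_not_eq _ _).symm
    have hd2 : Disjoint (tL.filter (fun P => P ∈ qF)) (tL.filter (fun P => P ∉ qF)) :=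
      Finset.disjoint_filter_filter_not _ _ _
    rw [htLsplit, Finset.sum_union hd2] at hcnt
    have hq3 : ∀ P ∈ tL.filter (fun P => P ∈ qF), m P - 1 = 3 := by
      intro P hP
      obtain ⟨-, hPq⟩ := Finset.mem_filter.mp hP
      rw [hqF4 P hPq]
    have ht2' : ∀ P ∈ tL.filter (fun P => P ∉ qF), m P - 1 = 2 := by
      intro P hP
      obtain ⟨hPtL, hPq⟩ := Finset.mem_filter.mp hP
      have hPt : P ∈ t := (Finset.mem_filter.mp hPtL).1
      have : P ∈ qF ∪ tF := htsubq hPt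
      rcases Finset.mem_union.mp this with h | h
      · exact absurd h hPq
      · rw [htF3 P h]
    rw [Finset.sum_congr rfl hq3, Finset.sum_congr rfl ht2',
      Finset.sum_const, Finset.sum_const] at hcnt
    -- so 9 = 3 * k1 + 2 * k2 with k1 ≤ 2, forcing k1 = 1
    set k1 := (tL.filter (fun P => P ∈ qF)).card with hk1
    have hk1le : k1 ≤ 2 := by
      have : tL.filter (fun P => P ∈ qF) ⊆ qF := by
        intro P hP
        exact (Finset.mem_filter.mp hP).2
      have := Finset.card_le_card this
      have hqcard : qF.card = 2 := by
        rw [hqF, Finset.card_insert_of_notMem (by simpa using hAB), Finset.card_singleton]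
      omega
    have hk1eq : k1 = 1 := by
      simp only [smul_eq_mul] at hcnt
      omega
    -- transfer to the filter over qF
    have : tL.filter (fun P => P ∈ qF) = qF.filter (fun P => OnLine P L) := by
      ext P
      simp only [Finset.mem_filter, htL]
      constructor
      · rintro ⟨⟨-, hOn⟩, hPq⟩
        exact ⟨hPq, hOn⟩
      · rintro ⟨hPq, hOn⟩
        exact ⟨⟨hqsub hPq, hOn⟩, hPq⟩
    rw [← this]
    exact hk1eq
  -- conclusion : every line passes through exactly one of A and B
  have hAcard : (s.filter (fun L => OnLine A L)).card = 4 := hmA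
  have hBcard : (s.filter (fun L => OnLine B L)).card = 4 := hmB
  have hsplit : (s.filter (fun L => OnLine A L)).card
      + (s.filter (fun L => ¬ OnLine A L)).card = s.card :=
    Finset.card_filter_add_card_filter_not _
  have hnegeq : s.filter (fun L => ¬ OnLine A L) = s.filter (fun L => OnLine B L) := by
    ext L
    simp only [Finset.mem_filter, and_congr_right_iff]
    intro hLs
    have h1 := hone L hLs
    by_cases pa : OnLine A L <;> by_cases pb : OnLine B L
    · exfalso
      have heq : qF.filter (fun P => OnLine P L) = {A, B} := by
        ext P
        simp only [Finset.mem_filter, hqF, Finset.mem_insert, Finset.mem_singleton]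
        constructor
        · exact fun h => h.1
        · rintro (rfl | rfl)
          exacts [⟨Or.inl rfl, pa⟩, ⟨Or.inr rfl, pb⟩]
      rw [heq, Finset.card_insert_of_notMem (by simpa using hAB),
        Finset.card_singleton] at h1
      omega
    · simp [pa, pb]
    · simp [pa, pb]
    · exfalso
      have heq : qF.filter (fun P => OnLine P L) = ∅ := by
        ext P
        simp only [Finset.mem_filter, hqF, Finset.mem_insert, Finset.mem_singleton,
          Finset.notMem_empty, iff_false, not_and]
        rintro (rfl | rfl)
        exacts [fun h => pa h, fun h => pb h]
      rw [heq, Finset.card_empty] at h1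
      omega
  rw [hnegeq, hBcard] at hsplit
  rw [hAcard, hscard] at hsplit
  omega
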